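/- arXiv:2007.05614 — 3 statements merged into one kernel-verified Lean document; each statement's English description precedes it below -/
import Mathlib

section
/- Let S be a finite nonempty type, P : S → S → ℝ a row-stochastic irreducible matrix with stationary distribution μ, and R, D : S → S → ℝ with D i j ≥ 0 for all i, j and Σ_i D̂ i · μ i > 0, where R̂ i = Σ_j R i j · P i j and D̂ i = Σ_j D i j · P i j. Let κ be the Markov kernel on S with κ i = Σ_j P i j • δ_j, and let ℙ_μ be the law on trajectory space S^ℕ of the time-homogeneous Markov chain (X_t)_{t ≥ 0} with transition kernel κ and initial distribution μ. Then for ℙ_μ-almost every trajectory, the limit lim_{T→∞} (Σ_{t=0}^{T−1} R(X_t, X_{t+1})) / (Σ_{t=0}^{T−1} D(X_t, X_{t+1})) exists and equals (Σ_i R̂ i · μ i) / (Σ_i D̂ i · μ i); in particular the expectation of this limit equals (Σ_i R̂ i · μ i) / (Σ_i D̂ i · μ i). -/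
open Finset Filter MeasureTheory ProbabilityTheory

/-- A matrix is row-stochastic if all entries are nonnegative and every row sums to 1. -/
def RowStochastic {S : Type*} [Fintype S] (P : S → S → ℝ) : Prop :=
  (∀ i j, 0 ≤ P i j) ∧ ∀ i, ∑ j, P i j = 1

/-- A matrix is irreducible if for all `i, j` there exists `n ≥ 1` with `(P ^ n) i j > 0`. -/
def MatIrreducible {S : Type*} [Fintype S] [DecidableEq S] (P : S → S → ℝ) : Prop :=
  ∀ i j, ∃ n, 1 ≤ n ∧ 0 < ((Matrix.of P) ^ n) i j

/-- A stationary distribution of a matrix `Q`. -/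
def MatIsStationary {T : Type*} [Fintype T] (Q : T → T → ℝ) (ν : T → ℝ) : Prop :=
  (∀ i, 0 ≤ ν i) ∧ (∑ i, ν i = 1) ∧ ∀ j, ∑ i, ν i * Q i j = ν j

/-- The probabilistic-termination matrix `P'_H` on `Option S`, with terminal state `none`
and restart state `s₀`. -/
noncomputable def PTMatrix {S : Type*} [Fintype S] [DecidableEq S]
    (P D : S → S → ℝ) (H : ℝ) (s₀ : S) : Option S → Option S → ℝ
  | some i, some j => (1 - 1 / H) ^ (D i j) * P i j
  | some i, none => ∑ j, (1 - (1 - 1 / H) ^ (D i j)) * P i j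
  | none, some j => if j = s₀ then 1 else 0
  | none, none => 0

/-- Expected one-step reward `R̂ i = ∑ j, R i j * P i j`. -/
noncomputable def Rhat {S : Type*} [Fintype S] (P R : S → S → ℝ) (i : S) : ℝ :=
  ∑ j, R i j * P i j

/-- Expected one-step difficulty contribution `D̂ i = ∑ j, D i j * P i j`. -/
noncomputable def Dhat {S : Type*} [Fintype S] (P D : S → S → ℝ) (i : S) : ℝ :=
  ∑ j, D i j * P i j

/-- Expected one-step reward in the probabilistically terminating chain. -/
noncomputable def RhatPT {S : Type*} [Fintype S] (P R D : S → S → ℝ) (H : ℝ) (i : S) : ℝ :=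
  ∑ j, R i j * ((1 - 1 / H) ^ (D i j) * P i j)

/-- Expected one-step difficulty contribution in the probabilistically terminating chain. -/
noncomputable def DhatPT {S : Type*} [Fintype S] (P D : S → S → ℝ) (H : ℝ) (i : S) : ℝ :=
  ∑ j, D i j * ((1 - 1 / H) ^ (D i j) * P i j)

section Det
variable {S : Type*} [Fintype S] [Nonempty S] [DecidableEq S]

lemma exists_bound (f : S → S → ℝ) : ∃ K, 0 ≤ K ∧ ∀ i j, |f i j| ≤ K := by
  refine ⟨∑ p : S × S, |f p.1 p.2|, Finset.sum_nonneg fun _ _ => abs_nonneg _, fun i j => ?_⟩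
  exact Finset.single_le_sum (f := fun p : S × S => |f p.1 p.2|)
    (fun _ _ => abs_nonneg _) (Finset.mem_univ (i, j))

lemma pow_entry_nonneg {P : S → S → ℝ} (hP0 : ∀ i j, 0 ≤ P i j) :
    ∀ n i j, 0 ≤ ((Matrix.of P) ^ n) i j := by
  intro n
  induction n with
  | zero => intro i j; simp [Matrix.one_apply]; positivity
  | succ n ih =>
    intro i j
    rw [pow_succ, Matrix.mul_apply]
    exact Finset.sum_nonneg fun k _ => mul_nonneg (ih i k) (hP0 k j)

lemma harmonic_const {P : S → S → ℝ} (hP : RowStochastic P) (hirr : MatIrreducible P)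
    (h : S → ℝ) (hh : ∀ i, ∑ j, P i j * h j = h i) : ∀ i j, h i = h j := by
  obtain ⟨i0, -, hi0⟩ := Finset.exists_max_image Finset.univ h ⟨Classical.arbitrary S, Finset.mem_univ _⟩
  have hmax : ∀ j, h j ≤ h i0 := fun j => hi0 j (Finset.mem_univ j)
  -- states reached from a max state are max states
  have key : ∀ k, h k = h i0 → ∀ j, 0 < P k j → h j = h i0 := by
    intro k hk j hkj
    have hz : ∑ j, P k j * (h i0 - h j) = 0 := by
      have := hh k
      have hr := hP.2 k
      have : ∑ j, P k j * (h i0 - h j) = (∑ j, P k j) * h i0 - ∑ j, P k j * h j := by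
        rw [Finset.sum_mul, ← Finset.sum_sub_distrib]; exact Finset.sum_congr rfl fun _ _ => by ring
      rw [this, hr, hh k, hk]; ring
    have hterm : ∀ j ∈ Finset.univ, P k j * (h i0 - h j) = 0 :=
      (Finset.sum_eq_zero_iff_of_nonneg (fun j _ =>
        mul_nonneg (hP.1 k j) (sub_nonneg.2 (hmax j)))).1 hz
    have := hterm j (Finset.mem_univ j)
    rcases mul_eq_zero.1 this with h1 | h2
    · exact absurd h1 (ne_of_gt hkj)
    · linarith [sub_eq_zero.1 h2]
  have pows : ∀ n j, 0 < ((Matrix.of P) ^ n) i0 j → h j = h i0 := by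
    intro n
    induction n with
    | zero =>
      intro j hj
      rw [pow_zero, Matrix.one_apply] at hj
      by_cases hij : i0 = j
      · rw [← hij]
      · simp [hij] at hj
    | succ n ih =>
      intro j hj
      rw [pow_succ, Matrix.mul_apply] at hj
      have hex : ∃ k, 0 < ((Matrix.of P) ^ n) i0 k * (Matrix.of P) k j := by
        by_contra hc
        push_neg at hc
        exact absurd (Finset.sum_nonpos fun k _ => hc k) (not_le.2 hj)
      obtain ⟨k, hk⟩ := hex
      have ha : 0 ≤ ((Matrix.of P) ^ n) i0 k := pow_entry_nonneg hP.1 n i0 k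
      have hb : 0 ≤ (Matrix.of P) k j := hP.1 k j
      rcases mul_pos_iff.1 hk with ⟨h1, h2⟩ | ⟨h1, h2⟩
      · exact key k (ih k h1) j h2
      · linarith
  intro i j
  obtain ⟨n, -, hn⟩ := hirr i0 i
  obtain ⟨m, -, hm⟩ := hirr i0 j
  rw [pows n i hn, pows m j hm]

end Det

section PoissonSec
variable {S : Type*} [Fintype S] [Nonempty S] [DecidableEq S]

lemma poisson {P : S → S → ℝ} (hP : RowStochastic P)
    (hconst : ∀ h : S → ℝ, (∀ i, ∑ j, P i j * h j = h i) → ∀ i j, h i = h j)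
    {μ : S → ℝ} (hμsum : ∑ i, μ i = 1) (hμst : ∀ j, ∑ i, μ i * P i j = μ j)
    (v : S → ℝ) (hv : ∑ i, μ i * v i = 0) :
    ∃ g : S → ℝ, ∀ i, g i - ∑ j, P i j * g j = v i := by
  classical
  let L : (S → ℝ) →ₗ[ℝ] (S → ℝ) :=
    LinearMap.id - (Matrix.of P).mulVecLin
  let φ : (S → ℝ) →ₗ[ℝ] ℝ :=
    { toFun := fun w => ∑ i, μ i * w i
      map_add' := by intro a b; simp [mul_add, Finset.sum_add_distrib]
      map_smul' := by intro c a; simp [Finset.mul_sum]; congr 1; funext i; ring }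
  have hLapp : ∀ g i, L g i = g i - ∑ j, P i j * g j := by
    intro g i
    simp [L, Matrix.mulVecLin_apply, Matrix.mulVec, dotProduct, Matrix.of_apply]
  have hker : LinearMap.ker L = Submodule.span ℝ {(fun _ => (1:ℝ) : S → ℝ)} := by
    apply le_antisymm
    · intro h hh
      have hh' : ∀ i, ∑ j, P i j * h j = h i := by
        intro i
        simp only [LinearMap.mem_ker] at hh
        have h0 : L h i = 0 := by rw [hh]; rfl
        rw [hLapp h i] at h0; linarith
      have hc := hconst h hh'
      exact Submodule.mem_span_singleton.2
        ⟨h (Classical.arbitrary S), funext fun j => by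
          simp [Pi.smul_apply, smul_eq_mul, mul_one, hc j (Classical.arbitrary S)]⟩
    · intro w hw
      obtain ⟨c, hc⟩ := Submodule.mem_span_singleton.1 hw
      rw [LinearMap.mem_ker]
      funext i
      have hwj : ∀ j, w j = c := fun j => by rw [← hc]; simp
      show L w i = 0
      rw [hLapp]
      simp only [hwj]
      rw [← Finset.sum_mul, hP.2 i]; ring
  have hle : LinearMap.range L ≤ LinearMap.ker φ := by
    rintro w ⟨g, rfl⟩
    rw [LinearMap.mem_ker]
    show ∑ i, μ i * L g i = 0
    have h1 : ∀ i, μ i * L g i = μ i * g i - ∑ j, μ i * (P i j * g j) := by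
      intro i; rw [hLapp, mul_sub, Finset.mul_sum]
    rw [Finset.sum_congr rfl fun i _ => h1 i, Finset.sum_sub_distrib, Finset.sum_comm]
    have h2 : ∀ j, ∑ i, μ i * (P i j * g j) = μ j * g j := by
      intro j
      rw [Finset.sum_congr rfl fun i _ => (mul_assoc (μ i) (P i j) (g j)).symm,
        ← Finset.sum_mul, hμst j]
    rw [Finset.sum_congr rfl fun j _ => h2 j, sub_self]
  -- dimension count
  have hφsurj : LinearMap.range φ = ⊤ := by
    rw [LinearMap.range_eq_top]
    intro c
    refine ⟨fun _ => c, ?_⟩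
    show ∑ i, μ i * c = c
    rw [← Finset.sum_mul, hμsum, one_mul]
  have hdimkerφ : Module.finrank ℝ (LinearMap.ker φ) = Fintype.card S - 1 := by
    have := LinearMap.finrank_range_add_finrank_ker φ
    rw [hφsurj] at this
    simp [Module.finrank_self] at this
    omega
  have hdimkerL : Module.finrank ℝ (LinearMap.ker L) = 1 := by
    rw [hker]
    rw [finrank_span_singleton]
    intro hcontra
    have := congrFun hcontra (Classical.arbitrary S)
    simp at this
  have hdimrange : Module.finrank ℝ (LinearMap.range L) = Fintype.card S - 1 := by
    have := LinearMap.finrank_range_add_finrank_ker L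
    rw [hdimkerL, Module.finrank_pi] at this
    have hcard : 1 ≤ Fintype.card S := Fintype.card_pos
    omega
  have heq : LinearMap.range L = LinearMap.ker φ :=
    Submodule.eq_of_le_of_finrank_le hle (by rw [hdimkerφ, hdimrange])
  have hvmem : v ∈ LinearMap.ker φ := by rw [LinearMap.mem_ker]; exact hv
  rw [← heq] at hvmem
  obtain ⟨g, hg⟩ := hvmem
  refine ⟨g, fun i => ?_⟩
  rw [← congrFun hg i, hLapp]

end PoissonSec


lemma bounded_div_tendsto (u : ℕ → ℝ) (C : ℝ) (hu : ∀ n, |u n| ≤ C) :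
    Filter.Tendsto (fun n : ℕ => u n / n) atTop (nhds 0) := by
  rw [tendsto_zero_iff_abs_tendsto_zero]
  apply squeeze_zero (fun n => abs_nonneg _) (g := fun n : ℕ => C / n)
  · intro n
    rcases Nat.eq_zero_or_pos n with rfl | hn
    · simpa using le_trans (abs_nonneg (u 0)) (hu 0)
    · rw [abs_div, abs_of_nonneg (by positivity : (0:ℝ) ≤ (n:ℝ))]
      exact div_le_div₀ (le_trans (abs_nonneg _) (hu 0)) (hu n) (by exact_mod_cast hn) le_rfl
  · exact tendsto_const_div_atTop_nhds_zero_nat C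

lemma sqrt_tendsto_atTop : Filter.Tendsto Nat.sqrt atTop atTop :=
  Filter.tendsto_atTop_atTop_of_monotone (fun _ _ h => Nat.sqrt_le_sqrt h)
    (fun b => ⟨b * b, by rw [Nat.sqrt_eq]⟩)

lemma gap_fill (Z : ℕ → ℝ) (K : ℝ) (hK0 : 0 ≤ K) (hZb : ∀ t, |Z t| ≤ K)
    (h2 : Filter.Tendsto
      (fun n : ℕ => |∑ t ∈ Finset.range (n^2), Z t| / ((n^2 : ℕ) : ℝ)) atTop (nhds 0)) :
    Filter.Tendsto (fun T : ℕ => (∑ t ∈ Finset.range T, Z t) / (T : ℝ)) atTop (nhds 0) := by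
  set M : ℕ → ℝ := fun T => ∑ t ∈ Finset.range T, Z t with hM
  set b : ℕ → ℝ := fun n => |M (n^2)| / ((n^2 : ℕ) : ℝ) + 2*K/(n:ℝ) with hb
  have hbt : Filter.Tendsto b atTop (nhds 0) := by
    rw [show (0:ℝ) = 0 + 0 by ring]
    exact Filter.Tendsto.add h2 (tendsto_const_div_atTop_nhds_zero_nat (2*K))
  have hcomp : Filter.Tendsto (fun T => b (Nat.sqrt T)) atTop (nhds 0) :=
    hbt.comp sqrt_tendsto_atTop
  rw [tendsto_zero_iff_abs_tendsto_zero]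
  apply squeeze_zero' (Filter.Eventually.of_forall fun T => abs_nonneg _)
    (g := fun T => b (Nat.sqrt T)) _ hcomp
  filter_upwards [Filter.eventually_ge_atTop 1] with T hT
  set n := Nat.sqrt T with hn
  have hn1 : 1 ≤ n := by
    rw [hn]
    have := Nat.sqrt_le_sqrt hT
    simpa using this
  have hle : n^2 ≤ T := Nat.sqrt_le' T
  have hlt : T < (n+1)^2 := Nat.lt_succ_sqrt' T
  have hdiff : (T : ℝ) - ((n^2 : ℕ) : ℝ) ≤ 2 * n := by
    have h1 : T ≤ n^2 + 2*n := by nlinarith [hlt]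
    have h2' : (T:ℝ) ≤ ((n:ℝ))^2 + 2*(n:ℝ) := by exact_mod_cast h1
    push_cast
    linarith
  have hMd : |M T - M (n^2)| ≤ ((T : ℝ) - ((n^2:ℕ):ℝ)) * K := by
    have he : M T - M (n^2) = ∑ t ∈ Finset.Ico (n^2) T, Z t := by
      rw [hM]
      simp only
      rw [← Finset.sum_range_add_sum_Ico _ hle]
      ring
    rw [he]
    calc |∑ t ∈ Finset.Ico (n^2) T, Z t| ≤ ∑ t ∈ Finset.Ico (n^2) T, |Z t| :=
          Finset.abs_sum_le_sum_abs _ _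
      _ ≤ ∑ _t ∈ Finset.Ico (n^2) T, K := Finset.sum_le_sum fun t _ => hZb t
      _ = ((T : ℝ) - ((n^2:ℕ):ℝ)) * K := by
          rw [Finset.sum_const, Nat.card_Ico, nsmul_eq_mul, Nat.cast_sub hle]
  have hMT : |M T| ≤ |M (n^2)| + 2*(n:ℝ)*K := by
    calc |M T| = |M (n^2) + (M T - M (n^2))| := by ring_nf
      _ ≤ |M (n^2)| + |M T - M (n^2)| := abs_add_le _ _
      _ ≤ |M (n^2)| + ((T : ℝ) - ((n^2:ℕ):ℝ)) * K := by linarith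
      _ ≤ |M (n^2)| + 2*(n:ℝ)*K := by nlinarith
  have hn2pos : (0:ℝ) < ((n^2 : ℕ) : ℝ) := by
    have : 1 ≤ n^2 := Nat.one_le_iff_ne_zero.2 (by positivity)
    exact_mod_cast Nat.lt_of_lt_of_le Nat.zero_lt_one this
  have hTpos : (0:ℝ) < (T:ℝ) := by exact_mod_cast hT
  have hTn : ((n^2:ℕ):ℝ) ≤ (T:ℝ) := by exact_mod_cast hle
  have hstep : |M T| / (T:ℝ) ≤ (|M (n^2)| + 2*(n:ℝ)*K) / ((n^2:ℕ):ℝ) :=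
    div_le_div₀ (by positivity) hMT hn2pos hTn
  have hsplit : (|M (n^2)| + 2*(n:ℝ)*K) / ((n^2:ℕ):ℝ) ≤ b n := by
    rw [hb]
    simp only
    rw [add_div]
    have hnn : ((n^2:ℕ):ℝ) = (n:ℝ) * (n:ℝ) := by push_cast; ring
    have hcast : 2*(n:ℝ)*K / ((n^2:ℕ):ℝ) = 2*K/(n:ℝ) := by
      rw [hnn]
      field_simp
    rw [hcast]
  calc |M T / (T:ℝ)| = |M T| / (T:ℝ) := by
        rw [abs_div, abs_of_pos hTpos]
    _ ≤ (|M (n^2)| + 2*(n:ℝ)*K) / ((n^2:ℕ):ℝ) := hstep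
    _ ≤ b n := hsplit


section P3
variable {S : Type*} [Fintype S] [Nonempty S] [MeasurableSpace S] [MeasurableSingletonClass S]
variable (P : S → S → ℝ) (μ : S → ℝ)

noncomputable def Wt (n : ℕ) (x : Fin (n+1) → S) : ℝ :=
  μ (x 0) * ∏ k : Fin n, P (x k.castSucc) (x k.succ)

lemma sum_snoc (n : ℕ) (F : (Fin (n+1) → S) → ℝ) :
    ∑ x : Fin (n+1) → S, F x = ∑ y : Fin n → S, ∑ s : S, F (Fin.snoc y s) := by
  classical
  rw [← Equiv.sum_comp (Fin.snocEquiv (fun _ => S)) F, Fintype.sum_prod_type]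
  rw [Finset.sum_comm]
  rfl

lemma Wt_snoc (n : ℕ) (y : Fin (n+1) → S) (s : S) :
    Wt P μ (n+1) (Fin.snoc y s) = Wt P μ n y * P (y (Fin.last n)) s := by
  rw [Wt, Wt, Fin.prod_univ_castSucc]
  rw [show (0 : Fin (n+2)) = Fin.castSucc 0 from rfl]
  simp only [Fin.snoc_castSucc, Fin.snoc_last, Fin.succ_castSucc, Fin.succ_last]
  ring

variable {P μ}

lemma exp_cylinder (Pr : Measure (ℕ → S)) [IsProbabilityMeasure Pr]
    (hlaw : ∀ (n : ℕ) (x : ℕ → S),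
      (Pr {ω | ∀ k ≤ n, ω k = x k}).toReal =
        μ (x 0) * ∏ k ∈ Finset.range n, P (x k) (x (k + 1)))
    (n : ℕ) (H : (Fin (n+1) → S) → ℝ) :
    ∫ ω, H (fun k => ω k) ∂Pr = ∑ x : Fin (n+1) → S, Wt P μ n x * H x := by
  classical
  set π : (ℕ → S) → (Fin (n+1) → S) := fun ω k => ω k with hπdef
  have hπ : Measurable π := measurable_pi_lambda _ fun k => measurable_pi_apply _
  have hmap : ∫ ω, H (π ω) ∂Pr = ∫ y, H y ∂(Pr.map π) :=
    (integral_map hπ.aemeasurable (measurable_of_finite H).aestronglyMeasurable).symm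
  have : IsProbabilityMeasure (Pr.map π) := Measure.isProbabilityMeasure_map hπ.aemeasurable
  rw [show (fun ω => H (fun k => ω k)) = fun ω => H (π ω) from rfl, hmap,
    integral_fintype (Integrable.of_finite)]
  refine Finset.sum_congr rfl fun x _ => ?_
  rw [measureReal_def, Measure.map_apply hπ (MeasurableSet.singleton x)]
  -- the extension of x to ℕ
  set xt : ℕ → S := fun k => if h : k < n + 1 then x ⟨k, h⟩ else x 0 with hxt
  have hpre : π ⁻¹' {x} = {ω | ∀ k ≤ n, ω k = xt k} := by
    ext ω
    simp only [Set.mem_preimage, Set.mem_singleton_iff, Set.mem_setOf_eq, funext_iff, hπdef]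
    constructor
    · intro h k hk
      have hk' : k < n + 1 := Nat.lt_succ_of_le hk
      rw [hxt]; simp only [hk', dif_pos]
      exact h ⟨k, hk'⟩
    · intro h k
      have := h k (Nat.lt_succ_iff.1 k.isLt)
      rw [hxt] at this
      simp only [k.isLt, dif_pos] at this
      convert this
  rw [hpre, hlaw n xt, smul_eq_mul]
  congr 1
  rw [Wt]
  congr 1
  · rw [← Fin.prod_univ_eq_prod_range (fun k => P (xt k) (xt (k+1))) n]
    refine Finset.prod_congr rfl fun k _ => ?_
    have h1 : (k : ℕ) < n + 1 := Nat.lt_succ_of_lt k.isLt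
    have h2 : (k : ℕ) + 1 < n + 1 := Nat.succ_lt_succ k.isLt
    rw [hxt]
    simp only [h1, h2, dif_pos]
    congr

lemma cross_zero (Pr : Measure (ℕ → S)) [IsProbabilityMeasure Pr]
    (hlaw : ∀ (n : ℕ) (x : ℕ → S),
      (Pr {ω | ∀ k ≤ n, ω k = x k}).toReal =
        μ (x 0) * ∏ k ∈ Finset.range n, P (x k) (x (k + 1)))
    (f : S → S → ℝ) (g : S → ℝ) (c : ℝ)
    (hpo : ∀ i, ∑ s, P i s * (f i s + g s - g i - c) = 0)
    (j k : ℕ) (hjk : j < k) :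
    ∫ ω, (f (ω j) (ω (j+1)) + g (ω (j+1)) - g (ω j) - c) *
         (f (ω k) (ω (k+1)) + g (ω (k+1)) - g (ω k) - c) ∂Pr = 0 := by
  classical
  have hj1 : j < k+1 := by omega
  have hj2 : j+1 < k+1 := by omega
  set H : (Fin (k+2) → S) → ℝ := fun x =>
    (f (x (Fin.castSucc ⟨j, hj1⟩)) (x (Fin.castSucc ⟨j+1, hj2⟩))
      + g (x (Fin.castSucc ⟨j+1, hj2⟩)) - g (x (Fin.castSucc ⟨j, hj1⟩)) - c) *
    (f (x (Fin.castSucc (Fin.last k))) (x (Fin.last (k+1)))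
      + g (x (Fin.last (k+1))) - g (x (Fin.castSucc (Fin.last k))) - c) with hH
  have h := exp_cylinder Pr hlaw (k+1) H
  have hint : (fun ω : ℕ → S => (f (ω j) (ω (j+1)) + g (ω (j+1)) - g (ω j) - c) *
      (f (ω k) (ω (k+1)) + g (ω (k+1)) - g (ω k) - c))
      = fun ω => H (fun t : Fin (k+2) => ω t) := rfl
  rw [hint, h, sum_snoc]
  apply Finset.sum_eq_zero
  intro y _
  have hterm : ∀ s, Wt P μ (k+1) (Fin.snoc y s) * H (Fin.snoc y s) =
      (Wt P μ k y *
        (f (y ⟨j, hj1⟩) (y ⟨j+1, hj2⟩) + g (y ⟨j+1, hj2⟩) - g (y ⟨j, hj1⟩) - c)) *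
      (P (y (Fin.last k)) s *
        (f (y (Fin.last k)) s + g s - g (y (Fin.last k)) - c)) := by
    intro s
    rw [Wt_snoc, hH]
    simp only [Fin.snoc_castSucc, Fin.snoc_last]
    ring
  rw [Finset.sum_congr rfl fun s _ => hterm s, ← Finset.mul_sum, hpo, mul_zero]

lemma Zmeas (f : S → S → ℝ) (g : S → ℝ) (c : ℝ) (t : ℕ) :
    Measurable (fun ω : ℕ → S => f (ω t) (ω (t+1)) + g (ω (t+1)) - g (ω t) - c) := by
  have h : Measurable (fun ω : ℕ → S => (ω t, ω (t+1))) :=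
    (measurable_pi_apply t).prodMk (measurable_pi_apply (t+1))
  exact (measurable_of_finite (fun p : S × S => f p.1 p.2 + g p.2 - g p.1 - c)).comp h

lemma Msq_bound (Pr : Measure (ℕ → S)) [IsProbabilityMeasure Pr]
    (hlaw : ∀ (n : ℕ) (x : ℕ → S),
      (Pr {ω | ∀ k ≤ n, ω k = x k}).toReal =
        μ (x 0) * ∏ k ∈ Finset.range n, P (x k) (x (k + 1)))
    (f : S → S → ℝ) (g : S → ℝ) (c : ℝ)
    (hpo : ∀ i, ∑ s, P i s * (f i s + g s - g i - c) = 0)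
    (K : ℝ) (hK0 : 0 ≤ K)
    (hK : ∀ a b, |f a b + g b - g a - c| ≤ K) (n : ℕ) :
    ∫ ω, (∑ t ∈ Finset.range n, (f (ω t) (ω (t+1)) + g (ω (t+1)) - g (ω t) - c))^2 ∂Pr
      ≤ n * K^2 := by
  classical
  set Z : ℕ → (ℕ → S) → ℝ := fun t ω => f (ω t) (ω (t+1)) + g (ω (t+1)) - g (ω t) - c with hZ
  have hZm : ∀ t, Measurable (Z t) := fun t => Zmeas f g c t
  have hZb : ∀ t ω, |Z t ω| ≤ K := fun t ω => hK _ _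
  have hintZZ : ∀ t u, Integrable (fun ω => Z t ω * Z u ω) Pr := by
    intro t u
    refine (integrable_const (K * K)).mono' ((hZm t).mul (hZm u)).aestronglyMeasurable
      (ae_of_all _ fun ω => ?_)
    rw [Real.norm_eq_abs, abs_mul]
    exact mul_le_mul (hZb t ω) (hZb u ω) (abs_nonneg _) hK0
  have hsq : ∀ ω, (∑ t ∈ Finset.range n, Z t ω)^2
      = ∑ t ∈ Finset.range n, ∑ u ∈ Finset.range n, Z t ω * Z u ω := by
    intro ω
    rw [sq, Finset.sum_mul_sum]
  rw [integral_congr_ae (ae_of_all _ hsq)]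
  rw [integral_finset_sum _ (fun t _ => integrable_finset_sum _ (fun u _ => hintZZ t u))]
  rw [Finset.sum_congr rfl (fun t _ => integral_finset_sum _ (fun u _ => hintZZ t u))]
  have hcross : ∀ t ∈ Finset.range n, ∀ u ∈ Finset.range n, t ≠ u →
      ∫ ω, Z t ω * Z u ω ∂Pr = 0 := by
    intro t _ u _ htu
    rcases lt_or_gt_of_ne htu with h | h
    · exact cross_zero Pr hlaw f g c hpo t u h
    · have := cross_zero Pr hlaw f g c hpo u t h
      rw [← this]
      exact integral_congr_ae (ae_of_all _ fun ω => mul_comm _ _)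
  have hdiag : ∀ t, ∫ ω, Z t ω * Z t ω ∂Pr ≤ K^2 := by
    intro t
    have : ∀ ω, Z t ω * Z t ω ≤ K^2 := by
      intro ω
      calc Z t ω * Z t ω = |Z t ω|^2 := by rw [sq_abs]; ring
        _ ≤ K^2 := pow_le_pow_left₀ (abs_nonneg _) (hZb t ω) 2
    calc ∫ ω, Z t ω * Z t ω ∂Pr ≤ ∫ _ω, K^2 ∂Pr :=
          integral_mono (hintZZ t t) (integrable_const _) this
      _ = K^2 := by simp
  calc ∑ t ∈ Finset.range n, ∑ u ∈ Finset.range n, ∫ ω, Z t ω * Z u ω ∂Pr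
      = ∑ t ∈ Finset.range n, ∫ ω, Z t ω * Z t ω ∂Pr := by
        refine Finset.sum_congr rfl fun t ht => ?_
        rw [Finset.sum_eq_single t (fun u hu hut => hcross t ht u hu (Ne.symm hut))
          (fun h => absurd ht h)]
    _ ≤ ∑ _t ∈ Finset.range n, K^2 :=
        Finset.sum_le_sum fun t _ => hdiag t
    _ = n * K^2 := by rw [Finset.sum_const, Finset.card_range, nsmul_eq_mul]

lemma M_ae_tendsto (Pr : Measure (ℕ → S)) [IsProbabilityMeasure Pr]
    (hlaw : ∀ (n : ℕ) (x : ℕ → S),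
      (Pr {ω | ∀ k ≤ n, ω k = x k}).toReal =
        μ (x 0) * ∏ k ∈ Finset.range n, P (x k) (x (k + 1)))
    (f : S → S → ℝ) (g : S → ℝ) (c : ℝ)
    (hpo : ∀ i, ∑ s, P i s * (f i s + g s - g i - c) = 0)
    (K : ℝ) (hK0 : 0 < K)
    (hK : ∀ a b, |f a b + g b - g a - c| ≤ K) :
    ∀ᵐ ω ∂Pr, Filter.Tendsto
      (fun n : ℕ => |∑ t ∈ Finset.range (n^2),
          (f (ω t) (ω (t+1)) + g (ω (t+1)) - g (ω t) - c)| / ((n^2 : ℕ) : ℝ))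
      atTop (nhds 0) := by
  classical
  set Z : ℕ → (ℕ → S) → ℝ := fun t ω => f (ω t) (ω (t+1)) + g (ω (t+1)) - g (ω t) - c with hZ
  set M : ℕ → (ℕ → S) → ℝ := fun n ω => ∑ t ∈ Finset.range n, Z t ω with hMdef
  have hZm : ∀ t, Measurable (Z t) := fun t => Zmeas f g c t
  have hMm : ∀ n, Measurable (M n) := fun n => Finset.measurable_sum _ (fun t _ => hZm t)
  have hMsq : ∀ n : ℕ, ∫ ω, (M n ω)^2 ∂Pr ≤ n * K^2 :=
    fun n => Msq_bound Pr hlaw f g c hpo K hK0.le hK n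
  -- Chebyshev bound for each ε > 0 and each n
  have cheb : ∀ ε : ℝ, 0 < ε → ∀ n : ℕ,
      Pr {ω | ε * (((n+1)^2 : ℕ) : ℝ) ≤ |M ((n+1)^2) ω|}
        ≤ ENNReal.ofReal (K^2/ε^2 * (1/((n+1 : ℕ):ℝ)^2)) := by
    intro ε hε n
    set N : ℕ := (n+1)^2 with hN
    have hNpos : (0:ℝ) < (N:ℝ) := by positivity
    set a : ℝ := (ε * N)^2 with ha
    have hapos : 0 < a := by positivity
    have hsub : {ω : ℕ → S | ε * (N:ℝ) ≤ |M N ω|} ⊆ {ω | a ≤ (M N ω)^2} := by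
      intro ω hω
      simp only [Set.mem_setOf_eq] at *
      calc a = (ε * N)^2 := rfl
        _ ≤ |M N ω|^2 := by
            apply pow_le_pow_left₀ (by positivity) hω
        _ = (M N ω)^2 := sq_abs _
    have hint : Integrable (fun ω => (M N ω)^2) Pr := by
      refine (integrable_const ((N:ℝ)^2 * K^2)).mono'
        (((hMm N).pow_const 2).aestronglyMeasurable) (ae_of_all _ fun ω => ?_)
      rw [Real.norm_eq_abs, abs_pow, sq_abs]
      have hb : |M N ω| ≤ N * K := by
        calc |M N ω| ≤ ∑ t ∈ Finset.range N, |Z t ω| := Finset.abs_sum_le_sum_abs _ _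
          _ ≤ ∑ _t ∈ Finset.range N, K := Finset.sum_le_sum fun t _ => hK _ _
          _ = N * K := by rw [Finset.sum_const, Finset.card_range, nsmul_eq_mul]
      calc (M N ω)^2 = |M N ω|^2 := (sq_abs _).symm
        _ ≤ ((N:ℝ) * K)^2 := pow_le_pow_left₀ (abs_nonneg _) hb 2
        _ = (N:ℝ)^2 * K^2 := by ring
    have markov := mul_meas_ge_le_integral_of_nonneg
      (ae_of_all Pr (fun ω => sq_nonneg (M N ω))) hint a
    have hmono : Pr {ω | ε * (N:ℝ) ≤ |M N ω|} ≤ Pr {ω | a ≤ (M N ω)^2} :=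
      measure_mono hsub
    have htoReal : (Pr {ω | ε * (N:ℝ) ≤ |M N ω|}).toReal ≤ K^2/ε^2 * (1/((n+1 : ℕ):ℝ)^2) := by
      have h1 : (Pr {ω | ε * (N:ℝ) ≤ |M N ω|}).toReal ≤ (Pr {ω | a ≤ (M N ω)^2}).toReal :=
        ENNReal.toReal_mono (measure_ne_top _ _) hmono
      have h2 : (Pr {ω | a ≤ (M N ω)^2}).toReal ≤ ((N:ℝ) * K^2) / a := by
        rw [le_div_iff₀ hapos, mul_comm]
        exact le_trans markov (hMsq N)
      have h3 : ((N:ℝ) * K^2) / a = K^2/ε^2 * (1/((n+1 : ℕ):ℝ)^2) := by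
        rw [ha, hN]
        have : (((n+1)^2 : ℕ) : ℝ) = ((n+1:ℕ):ℝ)^2 := by push_cast; ring
        rw [this]
        field_simp
      linarith
    calc Pr {ω | ε * (((n+1)^2:ℕ):ℝ) ≤ |M ((n+1)^2) ω|}
        = ENNReal.ofReal ((Pr {ω | ε * ((N:ℕ):ℝ) ≤ |M N ω|}).toReal) := by
          rw [ENNReal.ofReal_toReal (measure_ne_top _ _)]
      _ ≤ ENNReal.ofReal (K^2/ε^2 * (1/((n+1 : ℕ):ℝ)^2)) := ENNReal.ofReal_le_ofReal htoReal
  -- Borel–Cantelli for ε = 1/(q+1)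
  have hBC : ∀ q : ℕ, ∀ᵐ ω ∂Pr, ∀ᶠ n in atTop,
      ¬ ((1/((q:ℝ)+1)) * (((n+1)^2 : ℕ) : ℝ) ≤ |M ((n+1)^2) ω|) := by
    intro q
    have hε : (0:ℝ) < 1/((q:ℝ)+1) := by positivity
    set C : ℝ := K^2/(1/((q:ℝ)+1))^2 with hC
    have hsum0 : Summable (fun n : ℕ => 1/((n:ℝ))^2) :=
      Real.summable_one_div_nat_pow.2 one_lt_two
    have hsum1 : Summable (fun n : ℕ => 1/((n+1 : ℕ):ℝ)^2) := by
      have := (summable_nat_add_iff 1).2 hsum0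
      exact this.congr fun n => by push_cast; ring_nf
    have hsum : Summable (fun n : ℕ => C * (1/((n+1 : ℕ):ℝ)^2)) := hsum1.mul_left C
    apply ae_eventually_notMem (s := fun n =>
      {ω | (1/((q:ℝ)+1)) * (((n+1)^2 : ℕ) : ℝ) ≤ |M ((n+1)^2) ω|})
    apply ne_top_of_le_ne_top ?_ (ENNReal.tsum_le_tsum (fun n => cheb _ hε n))
    rw [← ENNReal.ofReal_tsum_of_nonneg (fun n => by positivity) hsum]
    exact ENNReal.ofReal_ne_top
  rw [← ae_all_iff] at hBC
  filter_upwards [hBC] with ω hω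
  rw [← tendsto_add_atTop_iff_nat 1]
  rw [Metric.tendsto_atTop]
  intro ε hε
  obtain ⟨q, hq⟩ := exists_nat_one_div_lt hε
  obtain ⟨N0, hN0⟩ := (Filter.eventually_atTop).1 (hω q)
  refine ⟨N0, fun n hn => ?_⟩
  have hlt := hN0 n hn
  push_neg at hlt
  have hNpos : (0:ℝ) < (((n+1)^2 : ℕ):ℝ) := by positivity
  rw [Real.dist_eq, sub_zero]
  have hval : |M ((n+1)^2) ω| / (((n+1)^2:ℕ):ℝ) < 1/((q:ℝ)+1) := by
    rw [div_lt_iff₀ hNpos]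
    calc |M ((n+1)^2) ω| < (1/((q:ℝ)+1)) * (((n+1)^2 : ℕ) : ℝ) := hlt
      _ = 1/((q:ℝ)+1) * (((n+1)^2:ℕ):ℝ) := rfl
  have habs : |(|M ((n+1)^2) ω| / (((n+1)^2:ℕ):ℝ))|
      = |M ((n+1)^2) ω| / (((n+1)^2:ℕ):ℝ) := by
    rw [abs_of_nonneg (by positivity)]
  rw [habs]
  calc |M ((n+1)^2) ω| / (((n+1)^2:ℕ):ℝ) < 1/((q:ℝ)+1) := hval
    _ < ε := by exact_mod_cast hq

lemma exists_bound' (f : S → S → ℝ) : ∃ K, 0 ≤ K ∧ ∀ i j, |f i j| ≤ K := by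
  refine ⟨∑ p : S × S, |f p.1 p.2|, Finset.sum_nonneg fun _ _ => abs_nonneg _, fun i j => ?_⟩
  exact Finset.single_le_sum (f := fun p : S × S => |f p.1 p.2|)
    (fun _ _ => abs_nonneg _) (Finset.mem_univ (i, j))

lemma bounded_div_tendsto' (u : ℕ → ℝ) (C : ℝ) (hu : ∀ n, |u n| ≤ C) :
    Filter.Tendsto (fun n : ℕ => u n / n) atTop (nhds 0) := by
  rw [tendsto_zero_iff_abs_tendsto_zero]
  apply squeeze_zero (fun n => abs_nonneg _) (g := fun n : ℕ => C / n)
  · intro n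
    rcases Nat.eq_zero_or_pos n with rfl | hn
    · simpa using le_trans (abs_nonneg (u 0)) (hu 0)
    · rw [abs_div, abs_of_nonneg (by positivity : (0:ℝ) ≤ (n:ℝ))]
      exact div_le_div₀ (le_trans (abs_nonneg _) (hu 0)) (hu n) (by exact_mod_cast hn) le_rfl
  · exact tendsto_const_div_atTop_nhds_zero_nat C

lemma sum_div_tendsto (Pr : Measure (ℕ → S)) [IsProbabilityMeasure Pr]
    (hlaw : ∀ (n : ℕ) (x : ℕ → S),
      (Pr {ω | ∀ k ≤ n, ω k = x k}).toReal =
        μ (x 0) * ∏ k ∈ Finset.range n, P (x k) (x (k + 1)))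
    (f : S → S → ℝ) (g : S → ℝ) (c : ℝ)
    (hpo : ∀ i, ∑ s, P i s * (f i s + g s - g i - c) = 0) :
    ∀ᵐ ω ∂Pr, Filter.Tendsto
      (fun T : ℕ => (∑ t ∈ Finset.range T, f (ω t) (ω (t+1))) / (T:ℝ))
      atTop (nhds c) := by
  classical
  obtain ⟨K0, hK00, hK0b⟩ := exists_bound' (fun a b => f a b + g b - g a - c)
  set K : ℝ := K0 + 1 with hKdef
  have hKpos : 0 < K := by linarith
  have hKb : ∀ a b, |f a b + g b - g a - c| ≤ K := fun a b => (hK0b a b).trans (by linarith)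
  have hae := M_ae_tendsto Pr hlaw f g c hpo K hKpos hKb
  obtain ⟨Kg, hKg0, hKgb⟩ := exists_bound' (fun a _ => g a)
  filter_upwards [hae] with ω hω
  set Z : ℕ → ℝ := fun t => f (ω t) (ω (t+1)) + g (ω (t+1)) - g (ω t) - c with hZ
  have hMten : Filter.Tendsto (fun T : ℕ => (∑ t ∈ Finset.range T, Z t) / (T:ℝ))
      atTop (nhds 0) := gap_fill Z K hKpos.le (fun t => hKb _ _) hω
  have hgten : Filter.Tendsto (fun T : ℕ => (g (ω 0) - g (ω T)) / (T:ℝ)) atTop (nhds 0) :=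
    bounded_div_tendsto' _ (2*Kg) (fun T => by
      have h1 := hKgb (ω 0) (ω 0)
      have h2 := hKgb (ω T) (ω T)
      calc |g (ω 0) - g (ω T)| ≤ |g (ω 0)| + |g (ω T)| := abs_sub _ _
        _ ≤ 2*Kg := by linarith)
  have hcomb : Filter.Tendsto
      (fun T : ℕ => (∑ t ∈ Finset.range T, Z t) / (T:ℝ) + (g (ω 0) - g (ω T)) / (T:ℝ) + c)
      atTop (nhds c) := by
    have := (hMten.add hgten).add_const c
    simpa using this
  apply hcomb.congr'
  filter_upwards [Filter.eventually_ge_atTop 1] with T hT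
  have hTpos : (0:ℝ) < (T:ℝ) := by exact_mod_cast hT
  have htel : ∑ t ∈ Finset.range T, (g (ω (t+1)) - g (ω t)) = g (ω T) - g (ω 0) :=
    Finset.sum_range_sub (fun t => g (ω t)) T
  have hsum : ∑ t ∈ Finset.range T, Z t
      = (∑ t ∈ Finset.range T, f (ω t) (ω (t+1))) + (g (ω T) - g (ω 0)) - T * c := by
    rw [hZ]
    rw [show (fun t => f (ω t) (ω (t+1)) + g (ω (t+1)) - g (ω t) - c)
        = fun t => f (ω t) (ω (t+1)) + (g (ω (t+1)) - g (ω t)) + (-c) from by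
      funext t; ring]
    rw [Finset.sum_add_distrib, Finset.sum_add_distrib, htel, Finset.sum_const,
      Finset.card_range, nsmul_eq_mul]
    ring
  rw [hsum]
  field_simp
  ring

end P3

/-- **Lemma 6 (REV_ARR).** For the stationary Markov chain with transition matrix `P`
and initial (stationary) distribution `μ` — whose trajectory law `Pr` on `ℕ → S` is
characterized by its finite-dimensional distributions — the ratio of accumulated rewards
to accumulated difficulty contributions converges almost surely to
`⟨R̂, μ⟩ / ⟨D̂, μ⟩`, and the expectation of the limit equals that ratio. -/
theorem arr_revenue_formula {S : Type*} [Fintype S] [Nonempty S] [DecidableEq S]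
    [MeasurableSpace S] [MeasurableSingletonClass S]
    (P R D : S → S → ℝ) (μ : S → ℝ)
    (hP : RowStochastic P) (hirr : MatIrreducible P) (hμ : MatIsStationary P μ)
    (hD0 : ∀ i j, 0 ≤ D i j)
    (hDpos : 0 < ∑ i, Dhat P D i * μ i)
    (Pr : Measure (ℕ → S)) [IsProbabilityMeasure Pr]
    (hlaw : ∀ (n : ℕ) (x : ℕ → S),
      (Pr {ω | ∀ k ≤ n, ω k = x k}).toReal =
        μ (x 0) * ∏ k ∈ Finset.range n, P (x k) (x (k + 1))) :
    (∀ᵐ ω ∂Pr, Tendsto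
        (fun T => (∑ t ∈ Finset.range T, R (ω t) (ω (t + 1))) /
          (∑ t ∈ Finset.range T, D (ω t) (ω (t + 1))))
        atTop
        (nhds ((∑ i, Rhat P R i * μ i) / (∑ i, Dhat P D i * μ i)))) ∧
      (∫ ω, limUnder atTop
          (fun T => (∑ t ∈ Finset.range T, R (ω t) (ω (t + 1))) /
            (∑ t ∈ Finset.range T, D (ω t) (ω (t + 1)))) ∂Pr) =
        (∑ i, Rhat P R i * μ i) / (∑ i, Dhat P D i * μ i) := by
  classical
  have hconst := harmonic_const hP hirr
  set cR : ℝ := ∑ i, Rhat P R i * μ i with hcR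
  set cD : ℝ := ∑ i, Dhat P D i * μ i with hcDdef
  have hcD : 0 < cD := hDpos
  have hvR : ∑ i, μ i * (Rhat P R i - cR) = 0 := by
    rw [show (fun i => μ i * (Rhat P R i - cR)) = fun i => Rhat P R i * μ i - μ i * cR from by
      funext i; ring, Finset.sum_sub_distrib, ← Finset.sum_mul, hμ.2.1, hcR]
    ring
  have hvD : ∑ i, μ i * (Dhat P D i - cD) = 0 := by
    rw [show (fun i => μ i * (Dhat P D i - cD)) = fun i => Dhat P D i * μ i - μ i * cD from by
      funext i; ring, Finset.sum_sub_distrib, ← Finset.sum_mul, hμ.2.1, hcDdef]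
    ring
  obtain ⟨gR, hgR⟩ := poisson hP hconst hμ.2.1 hμ.2.2 _ hvR
  obtain ⟨gD, hgD⟩ := poisson hP hconst hμ.2.1 hμ.2.2 _ hvD
  have hpoisson : ∀ (f : S → S → ℝ) (g : S → ℝ) (c : ℝ),
      (∀ i, g i - ∑ j, P i j * g j = (∑ j, f i j * P i j) - c) →
      ∀ i, ∑ s, P i s * (f i s + g s - g i - c) = 0 := by
    intro f g c hg i
    have h1 : ∑ s, P i s * (f i s + g s - g i - c)
        = (∑ s, P i s * f i s) + (∑ s, P i s * g s) - (∑ s, P i s) * (g i + c) := by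
      rw [show (fun s => P i s * (f i s + g s - g i - c))
          = fun s => (P i s * f i s + P i s * g s) - P i s * (g i + c) from by
        funext s; ring, Finset.sum_sub_distrib, Finset.sum_add_distrib, ← Finset.sum_mul]
    rw [h1, hP.2 i, one_mul]
    have h2 : ∑ s, P i s * f i s = ∑ s, f i s * P i s :=
      Finset.sum_congr rfl fun s _ => mul_comm _ _
    have := hg i
    rw [h2]
    linarith
  have hpoR : ∀ i, ∑ s, P i s * (R i s + gR s - gR i - cR) = 0 :=
    hpoisson R gR cR (fun i => hgR i)
  have hpoD : ∀ i, ∑ s, P i s * (D i s + gD s - gD i - cD) = 0 :=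
    hpoisson D gD cD (fun i => hgD i)
  have haeR := sum_div_tendsto Pr hlaw R gR cR hpoR
  have haeD := sum_div_tendsto Pr hlaw D gD cD hpoD
  have haeMain : ∀ᵐ ω ∂Pr, Filter.Tendsto
      (fun T => (∑ t ∈ Finset.range T, R (ω t) (ω (t + 1))) /
        (∑ t ∈ Finset.range T, D (ω t) (ω (t + 1))))
      atTop (nhds (cR / cD)) := by
    filter_upwards [haeR, haeD] with ω hRten hDten
    have hdiv := hRten.div hDten (ne_of_gt hcD)
    apply hdiv.congr'
    filter_upwards [Filter.eventually_ge_atTop 1] with T hT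
    have hTne : (T:ℝ) ≠ 0 := by
      have : (0:ℝ) < (T:ℝ) := by exact_mod_cast hT
      linarith
    simp only [Pi.div_apply]
    rw [div_eq_mul_inv ((∑ t ∈ Finset.range T, R (ω t) (ω (t + 1))) / (T:ℝ)), inv_div,
      div_mul_div_comm, mul_comm ((∑ t ∈ Finset.range T, R (ω t) (ω (t + 1)))) (T:ℝ),
      mul_div_mul_left _ _ hTne]
  refine ⟨haeMain, ?_⟩
  have haeLim : (fun ω => limUnder atTop
      (fun T => (∑ t ∈ Finset.range T, R (ω t) (ω (t + 1))) /
        (∑ t ∈ Finset.range T, D (ω t) (ω (t + 1)))))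
      =ᵐ[Pr] fun _ => cR / cD := by
    filter_upwards [haeMain] with ω h
    exact h.limUnder_eq
  rw [integral_congr_ae haeLim, integral_const]
  simp
end

section
/- Let x, d, m, rev, ε, Rmax, Dmax, H be real numbers with H > 1, ε > 0, Dmax ≥ 1, 0 ≤ x ≤ Rmax, d ≥ ε, 0 ≤ m ≤ Dmax/(H − 1), d − Dmax·m ≥ ε, and x/(d + (Dmax + 1)·m) ≤ rev ≤ x/(d − Dmax·m). Then |rev − x/d| ≤ 3 · Dmax² · Rmax / (ε² · (H − 1)). -/
/-- Algebraic core of Lemma 7: if the PT revenue `rev` is sandwiched between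
`x / (d + (Dmax + 1) * m)` and `x / (d - Dmax * m)`, where `m ≤ Dmax / (H - 1)` is the
stationary mass of the terminal state, then `rev` is within
`3 * Dmax ^ 2 * Rmax / (ε ^ 2 * (H - 1))` of `x / d`. -/
theorem pt_revenue_sandwich_bound (x d m rev ε Rmax Dmax H : ℝ)
    (hH : 1 < H) (hε : 0 < ε) (hDmax : 1 ≤ Dmax)
    (hx0 : 0 ≤ x) (hx1 : x ≤ Rmax) (hd : ε ≤ d)
    (hm0 : 0 ≤ m) (hm1 : m ≤ Dmax / (H - 1))
    (hdm : ε ≤ d - Dmax * m)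
    (hrev1 : x / (d + (Dmax + 1) * m) ≤ rev) (hrev2 : rev ≤ x / (d - Dmax * m)) :
    |rev - x / d| ≤ 3 * Dmax ^ 2 * Rmax / (ε ^ 2 * (H - 1)) := by
  have hH1 : 0 < H - 1 := by linarith
  have hd0 : 0 < d := lt_of_lt_of_le hε hd
  have hdm0 : 0 < d - Dmax * m := lt_of_lt_of_le hε hdm
  have hdp0 : 0 < d + (Dmax + 1) * m := by nlinarith
  have hmH : m * (H - 1) ≤ Dmax := by
    rw [div_eq_mul_inv] at hm1
    calc m * (H - 1) ≤ Dmax * (H - 1)⁻¹ * (H - 1) :=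
          mul_le_mul_of_nonneg_right hm1 (le_of_lt hH1)
      _ = Dmax := by field_simp
  have hR0 : 0 ≤ Rmax := le_trans hx0 hx1
  have hden : 0 < ε ^ 2 * (H - 1) := by positivity
  have hB : m * (H - 1) * ε ^ 2 ≤ Dmax * ε ^ 2 :=
    mul_le_mul_of_nonneg_right hmH (by positivity)
  have hC : ε * ε ≤ (d - Dmax * m) * d := mul_le_mul hdm hd hε.le hdm0.le
  have hCp : ε * ε ≤ d * (d + (Dmax + 1) * m) := by
    nlinarith [mul_le_mul hd hd hε.le hd0.le, mul_nonneg hd0.le (mul_nonneg (by linarith : (0:ℝ) ≤ Dmax + 1) hm0)]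
  rw [abs_sub_le_iff]
  constructor
  · have h2 : x / (d - Dmax * m) - x / d ≤ 3 * Dmax ^ 2 * Rmax / (ε ^ 2 * (H - 1)) := by
      rw [div_sub_div _ _ (ne_of_gt hdm0) (ne_of_gt hd0), div_le_div_iff₀ (by positivity) hden]
      calc (x * d - (d - Dmax * m) * x) * (ε ^ 2 * (H - 1))
          = (x * Dmax) * (m * (H - 1) * ε ^ 2) := by ring
        _ ≤ (Rmax * Dmax) * (Dmax * ε ^ 2) :=
            mul_le_mul (mul_le_mul_of_nonneg_right hx1 (by linarith)) hB
              (by positivity) (by positivity)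
        _ = (Dmax ^ 2 * Rmax) * (ε * ε) := by ring
        _ ≤ (Dmax ^ 2 * Rmax) * ((d - Dmax * m) * d) :=
            mul_le_mul_of_nonneg_left hC (by positivity)
        _ ≤ 3 * Dmax ^ 2 * Rmax * ((d - Dmax * m) * d) := by
            nlinarith [mul_nonneg (mul_nonneg (by positivity : (0:ℝ) ≤ Dmax ^ 2 * Rmax)
              hdm0.le) hd0.le]
    linarith
  · have h2 : x / d - x / (d + (Dmax + 1) * m) ≤ 3 * Dmax ^ 2 * Rmax / (ε ^ 2 * (H - 1)) := by
      rw [div_sub_div _ _ (ne_of_gt hd0) (ne_of_gt hdp0), div_le_div_iff₀ (by positivity) hden]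
      calc (x * (d + (Dmax + 1) * m) - d * x) * (ε ^ 2 * (H - 1))
          = (x * (Dmax + 1)) * (m * (H - 1) * ε ^ 2) := by ring
        _ ≤ (Rmax * (2 * Dmax)) * (Dmax * ε ^ 2) :=
            mul_le_mul (mul_le_mul hx1 (by linarith) (by linarith) hR0) hB
              (by positivity) (by positivity)
        _ = (2 * Dmax ^ 2 * Rmax) * (ε * ε) := by ring
        _ ≤ (2 * Dmax ^ 2 * Rmax) * (d * (d + (Dmax + 1) * m)) :=
            mul_le_mul_of_nonneg_left hCp (by positivity)
        _ ≤ 3 * Dmax ^ 2 * Rmax * (d * (d + (Dmax + 1) * m)) := by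
            nlinarith [mul_nonneg (mul_nonneg (by positivity : (0:ℝ) ≤ Dmax ^ 2 * Rmax)
              hd0.le) hdp0.le]
    linarith
end

section
/- Let S be a finite nonempty type, P : S → S → ℝ a row-stochastic matrix, D : S → S → ℝ with 0 ≤ D i j ≤ Dmax for a real Dmax ≥ 1, H > 1 a real number, and s₀ ∈ S. Then every stationary distribution μ' of the probabilistic-termination matrix P'_H on Option S satisfies μ' none ≤ Dmax / (H − 1). -/
open Finset Filter MeasureTheory ProbabilityTheory

/-- A stationary distribution of a matrix `Q`. -/
def IsStationaryDistr {T : Type*} [Fintype T] (Q : T → T → ℝ) (ν : T → ℝ) : Prop :=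
  (∀ i, 0 ≤ ν i) ∧ (∑ i, ν i = 1) ∧ ∀ j, ∑ i, ν i * Q i j = ν j

/-- Bound on the stationary probability of the terminal state of the PT chain:
`μ' none ≤ Dmax / (H - 1)`. -/
theorem pt_terminal_state_stationary_mass_bound {S : Type*} [Fintype S] [Nonempty S]
    [DecidableEq S] (P D : S → S → ℝ) (Dmax H : ℝ) (s₀ : S)
    (hP : RowStochastic P)
    (hD0 : ∀ i j, 0 ≤ D i j) (hD1 : ∀ i j, D i j ≤ Dmax)
    (hDmax : 1 ≤ Dmax) (hH : 1 < H) :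
    ∀ μ' : Option S → ℝ, IsStationaryDistr (PTMatrix P D H s₀) μ' →
      μ' none ≤ Dmax / (H - 1) := by
  intro μ' hμ
  obtain ⟨hnn, hsum, hstat⟩ := hμ
  have hH0 : (0:ℝ) < H := by linarith
  have hx0 : (0:ℝ) ≤ 1 - 1 / H := by
    have : 1 / H ≤ 1 := by rw [div_le_one hH0]; linarith
    linarith
  have hx1 : 1 - 1 / H ≤ 1 := by
    have : (0:ℝ) ≤ 1 / H := by positivity
    linarith
  -- key bound on the termination column entry
  have key : ∀ i : S, PTMatrix P D H s₀ (some i) none ≤ Dmax / H := by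
    intro i
    have hterm : ∀ j, (1 - (1 - 1 / H) ^ (D i j)) * P i j ≤ (Dmax / H) * P i j := by
      intro j
      refine mul_le_mul_of_nonneg_right ?_ (hP.1 i j)
      -- 1 - x^{D i j} ≤ 1 - x^{Dmax} ≤ Dmax/H
      have h1 : (1 - 1 / H) ^ (Dmax) ≤ (1 - 1 / H) ^ (D i j) := by
        rcases eq_or_lt_of_le hx0 with h | h
        · rw [← h]
          rw [Real.zero_rpow (by intro hc; have := hD1 i j; have := hDmax; nlinarith [hD0 i j] : Dmax ≠ 0)]
          positivity
        · exact Real.rpow_le_rpow_of_exponent_ge h hx1 (hD1 i j)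
      have h2 : 1 + Dmax * (-(1 / H)) ≤ (1 + (-(1 / H))) ^ Dmax := by
        apply one_add_mul_self_le_rpow_one_add _ hDmax
        have : 1 / H ≤ 1 := by rw [div_le_one hH0]; linarith
        linarith
      have h2' : 1 - Dmax / H ≤ (1 - 1 / H) ^ Dmax := by
        have e1 : 1 + Dmax * (-(1 / H)) = 1 - Dmax / H := by ring
        have e2 : (1:ℝ) + (-(1 / H)) = 1 - 1 / H := by ring
        rw [e1, e2] at h2; exact h2
      linarith
    calc PTMatrix P D H s₀ (some i) none = ∑ j, (1 - (1 - 1 / H) ^ (D i j)) * P i j := rfl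
      _ ≤ ∑ j, (Dmax / H) * P i j := Finset.sum_le_sum fun j _ => hterm j
      _ = Dmax / H := by rw [← Finset.mul_sum, hP.2 i, mul_one]
  have hnone : μ' none = ∑ i : S, μ' (some i) * PTMatrix P D H s₀ (some i) none := by
    have := hstat none
    rw [Fintype.sum_option] at this
    simpa [PTMatrix] using this.symm
  have hsum' : ∑ i : S, μ' (some i) ≤ 1 := by
    have := hsum
    rw [Fintype.sum_option] at this
    have h0 := hnn none
    linarith
  have hPTnn : ∀ i : S, 0 ≤ PTMatrix P D H s₀ (some i) none := by
    intro i
    apply Finset.sum_nonneg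
    intro j _
    apply mul_nonneg _ (hP.1 i j)
    have : (1 - 1 / H) ^ (D i j) ≤ 1 := Real.rpow_le_one hx0 hx1 (hD0 i j)
    linarith
  have hbound : μ' none ≤ Dmax / H := by
    rw [hnone]
    calc ∑ i : S, μ' (some i) * PTMatrix P D H s₀ (some i) none
        ≤ ∑ i : S, μ' (some i) * (Dmax / H) :=
          Finset.sum_le_sum fun i _ => mul_le_mul_of_nonneg_left (key i) (hnn (some i))
      _ = (∑ i : S, μ' (some i)) * (Dmax / H) := by rw [← Finset.sum_mul]
      _ ≤ 1 * (Dmax / H) := by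
          apply mul_le_mul_of_nonneg_right hsum'
          positivity
      _ = Dmax / H := one_mul _
  have : Dmax / H ≤ Dmax / (H - 1) := by
    apply div_le_div_of_nonneg_left (by linarith) (by linarith) (by linarith)
  linarith
end
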